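/- Let w be a finite rich word and let u be a non-palindromic factor of w. Let p be the longest palindromic prefix of u and q the longest palindromic suffix of u. Then p ≠ q, p is not a factor of q, and q is not a factor of p. -/

import Mathlib

/-- The finset of (distinct) palindromic factors of a finite word `w`,
including the empty word. -/
def palFactors {A : Type*} [DecidableEq A] (w : List A) : Finset (List A) :=
  ((w.inits.flatMap List.tails).filter (fun u => u.reverse = u)).toFinset

/-- A finite word `w` is rich if it has exactly `|w| + 1` distinct palindromic factors. -/
def Rich {A : Type*} [DecidableEq A] (w : List A) : Prop :=
  (palFactors w).card = w.length + 1

/-- `p` is the longest palindromic prefix of `u`. -/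
def LongestPalPrefix {A : Type*} (p u : List A) : Prop :=
  p <+: u ∧ p.reverse = p ∧ ∀ p' : List A, p' <+: u → p'.reverse = p' → p'.length ≤ p.length

/-- `q` is the longest palindromic suffix of `u`. -/
def LongestPalSuffix {A : Type*} (q u : List A) : Prop :=
  q <:+ u ∧ q.reverse = q ∧ ∀ q' : List A, q' <:+ u → q'.reverse = q' → q'.length ≤ q.length

section RichAux
open List

lemma infix_iff_sp {A : Type*} {x w : List A} : x <:+: w ↔ ∃ t, x <:+ t ∧ t <+: w := by
  constructor
  · rintro ⟨a, b, rfl⟩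
    exact ⟨a ++ x, ⟨a, rfl⟩, ⟨b, by simp⟩⟩
  · rintro ⟨t, ⟨c, rfl⟩, ⟨d, rfl⟩⟩
    exact ⟨c, d, by simp⟩

variable {A : Type*} [DecidableEq A]

lemma mem_palFactors {w x : List A} : x ∈ palFactors w ↔ x <:+: w ∧ x.reverse = x := by
  simp only [palFactors, List.mem_toFinset, List.mem_filter, List.mem_flatMap,
    List.mem_inits, List.mem_tails, decide_eq_true_eq]
  rw [infix_iff_sp]
  tauto

lemma palFactors_mono {v w : List A} (h : v <:+: w) : palFactors v ⊆ palFactors w :=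
  fun x hx => mem_palFactors.2 ⟨(mem_palFactors.1 hx).1.trans h, (mem_palFactors.1 hx).2⟩

lemma palFactors_reverse (w : List A) : palFactors w.reverse = palFactors w := by
  ext x
  simp only [mem_palFactors]
  constructor
  · rintro ⟨h1, h2⟩
    refine ⟨?_, h2⟩
    have : x.reverse <:+: w.reverse := by rw [h2]; exact h1
    exact reverse_infix.1 this
  · rintro ⟨h1, h2⟩
    refine ⟨?_, h2⟩
    have := reverse_infix.2 h1
    rwa [h2] at this

lemma exists_maxPalSuffix (v : List A) :
    ∃ q : List A, q <:+ v ∧ q.reverse = q ∧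
      ∀ s : List A, s <:+ v → s.reverse = s → s.length ≤ q.length := by
  classical
  let S : Finset (List A) := (v.tails.filter (fun s => s.reverse = s)).toFinset
  have hmem : ∀ s : List A, s ∈ S ↔ s <:+ v ∧ s.reverse = s := by
    intro s
    simp [S, List.mem_filter, List.mem_tails]
  have hne : S.Nonempty := ⟨[], (hmem []).2 ⟨nil_suffix, rfl⟩⟩
  obtain ⟨q, hqS, hmax⟩ := S.exists_max_image (fun l => l.length) hne
  obtain ⟨h1, h2⟩ := (hmem q).1 hqS
  exact ⟨q, h1, h2, fun s hs1 hs2 => hmax s ((hmem s).2 ⟨hs1, hs2⟩)⟩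

lemma prefix_dropLast' {p v : List A} (h : p <+: v) (hl : p.length < v.length) :
    p <+: v.dropLast := by
  obtain ⟨r, rfl⟩ := h
  have hr : r ≠ [] := by rintro rfl; simp at hl
  rw [dropLast_append_of_ne_nil hr]
  exact prefix_append _ _

lemma suffix_pal_infix_dropLast {s q v : List A} (hs : s.reverse = s) (hq : q.reverse = q)
    (hsv : s <:+ v) (hqv : q <:+ v) (hlen : s.length < q.length) : s <:+: v.dropLast := by
  have hsq : s <:+ q := by
    rcases suffix_or_suffix_of_suffix hsv hqv with h | h
    · exact h
    · have := h.length_le; omega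
  have hsp : s <+: q := by
    rw [← hs, ← hq]; exact reverse_prefix.2 hsq
  obtain ⟨r, rfl⟩ := hsp
  obtain ⟨x, hx⟩ := hqv
  have hrne : r ≠ [] := by rintro rfl; simp at hlen
  have hd : v.dropLast = x ++ s ++ r.dropLast := by
    rw [← hx, ← append_assoc, dropLast_append_of_ne_nil hrne]
  rw [hd]
  exact ⟨x, r.dropLast, rfl⟩

lemma infix_suffix_of_not_dropLast {x v : List A} (h : x <:+: v)
    (hnot : ¬ x <:+: v.dropLast) : x <:+ v := by
  obtain ⟨a, b, hab⟩ := h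
  rcases eq_or_ne b [] with rfl | hb
  · exact ⟨a, by simpa using hab⟩
  · exfalso
    apply hnot
    rw [← hab, dropLast_append_of_ne_nil hb]
    exact ⟨a, b.dropLast, by simp⟩

lemma palFactors_subset_insert (v : List A) :
    ∃ q : List A, palFactors v ⊆ insert q (palFactors v.dropLast) := by
  obtain ⟨q, hq1, hq2, hq3⟩ := exists_maxPalSuffix v
  refine ⟨q, fun x hx => ?_⟩
  obtain ⟨hinf, hpal⟩ := mem_palFactors.1 hx
  by_cases h : x <:+: v.dropLast
  · exact Finset.mem_insert_of_mem (mem_palFactors.2 ⟨h, hpal⟩)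
  · have hxs := infix_suffix_of_not_dropLast hinf h
    have hle := hq3 x hxs hpal
    rcases lt_or_eq_of_le hle with hlt | heq
    · exact absurd (suffix_pal_infix_dropLast hpal hq2 hxs hq1 hlt) h
    · have : x = q := by
        rcases suffix_or_suffix_of_suffix hxs hq1 with h' | h'
        · exact h'.eq_of_length heq
        · exact (h'.eq_of_length heq.symm).symm
      rw [this]; exact Finset.mem_insert_self _ _

lemma card_palFactors_dropLast (v : List A) :
    (palFactors v).card ≤ (palFactors v.dropLast).card + 1 := by
  obtain ⟨q, hsub⟩ := palFactors_subset_insert v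
  calc (palFactors v).card ≤ (insert q (palFactors v.dropLast)).card := Finset.card_le_card hsub
    _ ≤ (palFactors v.dropLast).card + 1 := Finset.card_insert_le _ _

lemma palFactors_nil : (palFactors ([] : List A)).card = 1 := by
  simp [palFactors]

lemma card_palFactors_le (v : List A) : (palFactors v).card ≤ v.length + 1 := by
  induction v using List.reverseRecOn with
  | nil => simp [palFactors_nil]
  | append_singleton l a ih =>
    have h1 := card_palFactors_dropLast (l ++ [a])
    have h2 : (l ++ [a]).dropLast = l := by simp
    rw [h2] at h1
    simp only [length_append, length_cons, length_nil]
    omega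

lemma rich_dropLast {v : List A} (hv : Rich v) (hne : v ≠ []) : Rich v.dropLast := by
  have h1 := card_palFactors_dropLast v
  have h2 := card_palFactors_le v.dropLast
  have h3 : v.dropLast.length = v.length - 1 := by simp
  have h4 : 1 ≤ v.length := length_pos_iff.2 hne
  unfold Rich at *
  omega

lemma rich_prefix : ∀ v : List A, Rich v → ∀ p : List A, p <+: v → Rich p := by
  intro v
  induction v using List.reverseRecOn with
  | nil => intro hv p hp; rw [prefix_nil.1 hp]; exact hv
  | append_singleton l a ih =>
    intro hv p hp
    rcases le_or_gt p.length l.length with hle | hlt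
    · have hpl : p <+: l :=
        prefix_of_prefix_length_le hp (prefix_append l [a]) hle
      have hrl : Rich l := by
        have := rich_dropLast hv (by simp)
        simpa using this
      exact ih hrl p hpl
    · have hlen : p.length = (l ++ [a]).length := by
        have := hp.length_le; simp at this ⊢; omega
      rw [hp.eq_of_length hlen]
      exact hv

lemma rich_reverse {v : List A} (hv : Rich v) : Rich v.reverse := by
  unfold Rich at *
  rw [palFactors_reverse, length_reverse]
  exact hv

lemma rich_infix {v w : List A} (h : v <:+: w) (hw : Rich w) : Rich v := by
  obtain ⟨t, hvt, htw⟩ := infix_iff_sp.1 h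
  have hrt : Rich t := rich_prefix w hw t htw
  have : Rich v.reverse := rich_prefix t.reverse (rich_reverse hrt) v.reverse
    (reverse_prefix.2 hvt)
  have := rich_reverse this
  simpa using this

lemma lps_not_infix_dropLast {v q : List A} (hv : Rich v) (hne : v ≠ [])
    (hq : LongestPalSuffix q v) : ¬ q <:+: v.dropLast := by
  intro hcon
  have hdrop : Rich v.dropLast := rich_dropLast hv hne
  have hsub : palFactors v.dropLast ⊆ palFactors v :=
    palFactors_mono (dropLast_prefix v).isInfix
  have hcard : (palFactors v.dropLast).card < (palFactors v).card := by
    have h3 : v.dropLast.length = v.length - 1 := by simp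
    have h4 : 1 ≤ v.length := length_pos_iff.2 hne
    unfold Rich at hv hdrop
    omega
  have hnotsub : ¬ palFactors v ⊆ palFactors v.dropLast := fun h =>
    absurd (Finset.card_le_card h) (not_le.2 hcard)
  obtain ⟨s, hs1, hs2⟩ := Finset.not_subset.1 hnotsub
  obtain ⟨hsinf, hspal⟩ := mem_palFactors.1 hs1
  have hsnotd : ¬ s <:+: v.dropLast := fun h => hs2 (mem_palFactors.2 ⟨h, hspal⟩)
  have hssuf : s <:+ v := infix_suffix_of_not_dropLast hsinf hsnotd
  have hle : s.length ≤ q.length := hq.2.2 s hssuf hspal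
  rcases lt_or_eq_of_le hle with hlt | heq
  · exact hsnotd (suffix_pal_infix_dropLast hspal hq.2.1 hssuf hq.1 hlt)
  · have hsq : s = q := by
      rcases suffix_or_suffix_of_suffix hssuf hq.1 with h' | h'
      · exact h'.eq_of_length heq
      · exact (h'.eq_of_length heq.symm).symm
    exact hsnotd (hsq ▸ hcon)

end RichAux

open List in
/-- If `u` is a non-palindromic factor of a finite rich word `w`, with longest
palindromic prefix `p` and longest palindromic suffix `q`, then `p ≠ q` and `p` and
`q` are not factors of each other. -/
theorem longest_pal_prefix_suffix_incomparable {A : Type*} [DecidableEq A]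
    (w u p q : List A) (hw : Rich w) (hu : u <:+: w) (hnp : u.reverse ≠ u)
    (hp : LongestPalPrefix p u) (hq : LongestPalSuffix q u) :
    p ≠ q ∧ ¬ p <:+: q ∧ ¬ q <:+: p := by
  have hune : u ≠ [] := by rintro rfl; exact hnp rfl
  have hru : Rich u := rich_infix hu hw
  have hplt : p.length < u.length := by
    rcases lt_or_eq_of_le hp.1.length_le with h | h
    · exact h
    · exact absurd (hp.1.eq_of_length h ▸ hp.2.1) hnp
  have hqlt : q.length < u.length := by
    rcases lt_or_eq_of_le hq.1.length_le with h | h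
    · exact h
    · exact absurd (hq.1.eq_of_length h ▸ hq.2.1) hnp
  have hqkey : ¬ q <:+: u.dropLast := lps_not_infix_dropLast hru hune hq
  have hlpsrev : LongestPalSuffix p u.reverse := by
    refine ⟨?_, hp.2.1, ?_⟩
    · rw [← hp.2.1]; exact reverse_suffix.2 hp.1
    · intro q' h1 h2
      rw [← h2] at h1
      exact hp.2.2 q' (reverse_suffix.1 h1) h2
  have hpkey : ¬ p <:+: u.reverse.dropLast :=
    lps_not_infix_dropLast (rich_reverse hru) (by simpa using hune) hlpsrev
  have hnpq : ¬ p <:+: q := by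
    intro h
    have hqr : q <+: u.reverse := by
      rw [← hq.2.1]; exact reverse_prefix.2 hq.1
    have hqd : q <+: u.reverse.dropLast :=
      prefix_dropLast' hqr (by simpa using hqlt)
    exact hpkey (h.trans hqd.isInfix)
  have hnqp : ¬ q <:+: p := by
    intro h
    have hpd : p <+: u.dropLast := prefix_dropLast' hp.1 hplt
    exact hqkey (h.trans hpd.isInfix)
  exact ⟨fun h => hnpq (h ▸ infix_refl p), hnpq, hnqp⟩
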